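/- Let k ≥ 2 be an integer, m an integer with m ≥ 2¹¹·k⁴, λ := 1/(10·log₂ m + 5), and x ∈ ℝⁿ with 0 ≤ x_i ≤ λ for all i and Σ_i x_i ≤ k. Assign each index i ∈ {1,…,n} independently and uniformly at random to one of m buckets. Then for each fixed bucket b, the probability that Σ_{i assigned to b} x_i > 1/5 is at most 1/(2m²). -/

import Mathlib

open MeasureTheory ProbabilityTheory
open scoped ENNReal

private lemma exp_sub_one_le (a : ℝ) : Real.exp a - 1 ≤ a * Real.exp a := by
  have h := Real.add_one_le_exp (-a)
  have he := (Real.exp_pos a).le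
  have h2 : (-a + 1) * Real.exp a ≤ Real.exp (-a) * Real.exp a :=
    mul_le_mul_of_nonneg_right h he
  rw [← Real.exp_add, neg_add_cancel, Real.exp_zero] at h2
  nlinarith

/-- Let `k ≥ 2`, `m ≥ 2¹¹·k⁴`, `λ := 1/(10·log₂ m + 5)`, and `x ∈ ℝⁿ` with
`0 ≤ x_i ≤ λ` for all `i` and `∑ x_i ≤ k`. Assign each index `i` independently and
uniformly at random to one of `m` buckets. Then for each fixed bucket `b`, the probability
that the total `x`-weight of bucket `b` exceeds `1/5` is at most `1/(2m²)`. -/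
theorem statement10 (k m n : ℕ) (hk : 2 ≤ k) (hm : 2 ^ 11 * k ^ 4 ≤ m)
    (x : Fin n → ℝ) (hx : ∀ i, 0 ≤ x i ∧ x i ≤ 1 / (10 * Real.logb 2 m + 5))
    (hsum : ∑ i, x i ≤ (k : ℝ))
    (Ω : Type) [MeasurableSpace Ω] (μ : Measure Ω) [IsProbabilityMeasure μ]
    (B : Fin n → Ω → Fin m)
    (hmeas : ∀ i, Measurable (B i))
    (hindep : iIndepFun B μ)
    (hunif : ∀ (i : Fin n) (b : Fin m), μ {ω | B i ω = b} = 1 / (m : ℝ≥0∞))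
    (b : Fin m) :
    μ {ω | (1 : ℝ) / 5 < ∑ i ∈ Finset.univ.filter (fun i => B i ω = b), x i}
      ≤ 1 / (2 * (m : ℝ≥0∞) ^ 2) := by
  classical
  -- basic numerics about m and k
  have hm2 : 2 ≤ m := by
    refine le_trans ?_ hm
    calc 2 ≤ 2 ^ 11 * 1 := by norm_num
      _ ≤ 2 ^ 11 * k ^ 4 := Nat.mul_le_mul_left _ (Nat.one_le_pow _ _ (by omega))
  have hm0 : (0 : ℝ) < m := by exact_mod_cast Nat.lt_of_lt_of_le (by norm_num) hm2
  have hmR : (2 : ℝ) ≤ m := by exact_mod_cast hm2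
  have h40k : (40 : ℝ) * k ≤ m := by
    have h1 : 40 * k ≤ 2 ^ 11 * k ^ 4 := by
      have h2 : 2 ^ 3 ≤ k ^ 3 := Nat.pow_le_pow_left hk 3
      calc 40 * k ≤ 2 ^ 11 * 2 ^ 3 * k := Nat.mul_le_mul_right k (by norm_num)
        _ ≤ 2 ^ 11 * k ^ 3 * k := Nat.mul_le_mul_right k (Nat.mul_le_mul_left _ h2)
        _ = 2 ^ 11 * k ^ 4 := by ring
    have h2 : (40 * k : ℕ) ≤ m := le_trans h1 hm
    exact_mod_cast h2
  have hlogm : 0 ≤ Real.log m := Real.log_nonneg (by linarith)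
  have hlog2 : 0 < Real.log 2 := Real.log_pos (by norm_num)
  set L : ℝ := Real.logb 2 m with hL
  have hL0 : 0 ≤ L := Real.logb_nonneg (by norm_num) (by linarith)
  have hLpos : 0 < 10 * L + 5 := by linarith
  set t : ℝ := 2 * Real.log 2 * (10 * L + 5) with ht
  have ht0 : 0 ≤ t := by positivity
  have htL : t * (1 / (10 * L + 5)) = 2 * Real.log 2 := by
    field_simp [ht]
    rw [ht]; ring
  have htval : t = 20 * Real.log m + 10 * Real.log 2 := by
    rw [ht, hL, Real.logb, div_eq_mul_inv]
    field_simp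
    ring
  -- the random variables
  set Y : Fin n → Ω → ℝ := fun i ω => if B i ω = b then x i else 0 with hY
  have hYmeas : ∀ i, Measurable (Y i) := fun i =>
    (measurable_of_countable (fun v : Fin m => if v = b then x i else 0)).comp (hmeas i)
  have hYindep : iIndepFun Y μ :=
    hindep.comp (fun i v => if v = b then x i else 0)
      (fun i => measurable_of_countable _)
  set W : Ω → ℝ := fun ω => ∑ i, Y i ω with hW
  have hWsum : W = ∑ i, Y i := by
    funext ω; rw [Finset.sum_apply]
  have hWmeas : Measurable W := by
    exact Finset.univ.measurable_sum (fun i _ => hYmeas i)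
  -- rewrite the event
  have hevent : ∀ ω, (∑ i ∈ Finset.univ.filter (fun i => B i ω = b), x i) = W ω := by
    intro ω
    rw [Finset.sum_filter]
  -- the per-coordinate mgf
  have hμb : ∀ i : Fin n, (μ {ω | B i ω = b}).toReal = 1 / m := by
    intro i
    rw [hunif i b, one_div, ENNReal.toReal_inv, ENNReal.toReal_natCast, one_div]
  have hmgf_i : ∀ i, mgf (Y i) μ t = 1 + (Real.exp (t * x i) - 1) * (1 / m) := by
    intro i
    have hms : MeasurableSet {ω | B i ω = b} := hmeas i (measurableSet_singleton b)
    have heq : (fun ω => Real.exp (t * Y i ω))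
        = fun ω => 1 + Set.indicator {ω | B i ω = b} (fun _ => Real.exp (t * x i) - 1) ω := by
      funext ω
      by_cases h : B i ω = b <;> simp [Set.indicator_apply, Set.mem_setOf_eq, h, hY]
    rw [mgf, heq,
      integral_add (integrable_const 1) ((integrable_const _).indicator hms),
      integral_indicator_const _ hms, integral_const, measureReal_def μ {ω | B i ω = b}, hμb i]
    simp [measure_univ]
    ring
  -- bound on each mgf
  have hx4 : ∀ i, Real.exp (t * x i) - 1 ≤ 4 * (t * x i) := by
    intro i
    have hxi0 : 0 ≤ t * x i := mul_nonneg ht0 (hx i).1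
    have h1 : t * x i ≤ 2 * Real.log 2 := by
      calc t * x i ≤ t * (1 / (10 * L + 5)) :=
            mul_le_mul_of_nonneg_left (hx i).2 ht0
        _ = 2 * Real.log 2 := htL
    have h2 : Real.exp (t * x i) ≤ 4 := by
      calc Real.exp (t * x i) ≤ Real.exp (2 * Real.log 2) := Real.exp_le_exp.2 h1
        _ = 4 := by
          rw [show (2 : ℝ) * Real.log 2 = Real.log 2 + Real.log 2 by ring,
            Real.exp_add, Real.exp_log (by norm_num : (0:ℝ) < 2)]
          norm_num
    have h3 := exp_sub_one_le (t * x i)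
    nlinarith [Real.exp_pos (t * x i)]
  have hmgf_le : ∀ i, mgf (Y i) μ t ≤ Real.exp (4 * t / m * x i) := by
    intro i
    rw [hmgf_i i]
    have h1 : (Real.exp (t * x i) - 1) * (1 / m) ≤ 4 * t / m * x i := by
      have := mul_le_mul_of_nonneg_right (hx4 i) (by positivity : (0:ℝ) ≤ 1 / m)
      calc (Real.exp (t * x i) - 1) * (1 / m) ≤ 4 * (t * x i) * (1 / m) := this
        _ = 4 * t / m * x i := by field_simp
    calc 1 + (Real.exp (t * x i) - 1) * (1 / m)
        ≤ Real.exp ((Real.exp (t * x i) - 1) * (1 / m)) := by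
          linarith [Real.add_one_le_exp ((Real.exp (t * x i) - 1) * (1 / m))]
      _ ≤ Real.exp (4 * t / m * x i) := Real.exp_le_exp.2 h1
  -- bound on the mgf of the sum
  have hmgfW : mgf W μ t ≤ Real.exp (4 * t * k / m) := by
    rw [hWsum, hYindep.mgf_sum hYmeas]
    calc ∏ i, mgf (Y i) μ t ≤ ∏ i, Real.exp (4 * t / m * x i) :=
          Finset.prod_le_prod (fun i _ => mgf_nonneg) (fun i _ => hmgf_le i)
      _ = Real.exp (∑ i, 4 * t / m * x i) := by rw [Real.exp_sum]
      _ ≤ Real.exp (4 * t * k / m) := by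
          apply Real.exp_le_exp.2
          rw [← Finset.mul_sum]
          have h4tm : (0:ℝ) ≤ 4 * t / m := by positivity
          calc 4 * t / m * ∑ i, x i ≤ 4 * t / m * k :=
                mul_le_mul_of_nonneg_left hsum h4tm
            _ = 4 * t * k / m := by ring
  -- integrability of exp (t * W)
  have hWle : ∀ ω, W ω ≤ k := by
    intro ω
    refine le_trans (Finset.sum_le_sum (fun i _ => ?_)) hsum
    simp only [hY]
    by_cases h : B i ω = b
    · rw [if_pos h]
    · rw [if_neg h]; exact (hx i).1
  have h_int : Integrable (fun ω => Real.exp (t * W ω)) μ := by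
    refine ⟨((hWmeas.const_mul t).exp).aestronglyMeasurable, ?_⟩
    refine HasFiniteIntegral.of_bounded (C := Real.exp (t * k)) (ae_of_all _ fun ω => ?_)
    rw [Real.norm_eq_abs, abs_of_pos (Real.exp_pos _)]
    exact Real.exp_le_exp.2 (mul_le_mul_of_nonneg_left (hWle ω) ht0)
  -- Chernoff
  have hmarkov := measure_ge_le_exp_mul_mgf (μ := μ) (X := W) (1/5) ht0 h_int
  -- numeric inequality
  have hA : 0 ≤ 2 * Real.log m + Real.log 2 := by linarith
  have hnum : -t * (1/5) + 4 * t * k / m ≤ -(2 * Real.log m + Real.log 2) := by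
    rw [htval]
    have h1 : 4 * (20 * Real.log m + 10 * Real.log 2) * k / m
        ≤ 2 * Real.log m + Real.log 2 := by
      rw [div_le_iff₀ hm0]
      nlinarith [mul_le_mul_of_nonneg_right h40k hA]
    linarith
  have hexp2 : Real.exp (-(2 * Real.log m + Real.log 2)) = 1 / (2 * (m:ℝ)^2) := by
    rw [Real.exp_neg, show 2 * Real.log m + Real.log 2 = Real.log m + Real.log m + Real.log 2 by ring,
      Real.exp_add, Real.exp_add, Real.exp_log hm0, Real.exp_log (by norm_num : (0:ℝ) < 2)]
    rw [one_div]
    ring_nf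
  have hreal : Real.exp (-t * (1/5)) * mgf W μ t ≤ 1 / (2 * (m:ℝ)^2) := by
    calc Real.exp (-t * (1/5)) * mgf W μ t
        ≤ Real.exp (-t * (1/5)) * Real.exp (4 * t * k / m) :=
          mul_le_mul_of_nonneg_left hmgfW (Real.exp_pos _).le
      _ = Real.exp (-t * (1/5) + 4 * t * k / m) := (Real.exp_add _ _).symm
      _ ≤ Real.exp (-(2 * Real.log m + Real.log 2)) := Real.exp_le_exp.2 hnum
      _ = 1 / (2 * (m:ℝ)^2) := hexp2
  -- assemble
  have hsub : {ω | (1 : ℝ) / 5 < ∑ i ∈ Finset.univ.filter (fun i => B i ω = b), x i}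
      ⊆ {ω | (1:ℝ)/5 ≤ W ω} := by
    intro ω hω
    simp only [Set.mem_setOf_eq] at hω ⊢
    rw [hevent ω] at hω
    exact hω.le
  have hRHS : (1 : ℝ≥0∞) / (2 * (m : ℝ≥0∞) ^ 2) = ENNReal.ofReal (1 / (2 * (m:ℝ)^2)) := by
    have h2 : ((2 : ℝ≥0∞) * (m : ℝ≥0∞) ^ 2) = ENNReal.ofReal (2 * (m:ℝ) ^ 2) := by
      rw [ENNReal.ofReal_mul (by norm_num), ENNReal.ofReal_pow hm0.le,
        ENNReal.ofReal_natCast, ENNReal.ofReal_ofNat]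
    rw [one_div, one_div, h2, ENNReal.ofReal_inv_of_pos (by positivity)]
  calc μ {ω | (1 : ℝ) / 5 < ∑ i ∈ Finset.univ.filter (fun i => B i ω = b), x i}
      ≤ μ {ω | (1:ℝ)/5 ≤ W ω} := measure_mono hsub
    _ ≤ ENNReal.ofReal (Real.exp (-t * (1/5)) * mgf W μ t) := by
        rw [ENNReal.le_ofReal_iff_toReal_le (measure_ne_top μ _)
          (mul_nonneg (Real.exp_pos _).le mgf_nonneg)]
        exact hmarkov
    _ ≤ ENNReal.ofReal (1 / (2 * (m:ℝ)^2)) := ENNReal.ofReal_le_ofReal hreal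
    _ = 1 / (2 * (m : ℝ≥0∞) ^ 2) := hRHS.symm
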